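/- arXiv:2006.15756 — 9 statements merged into one kernel-verified Lean document; each statement's English description precedes it below -/
import Mathlib

section
/- For all positive reals λ, k, μ, the quantity Δ_WP = 1/λ + 1/k + 1/μ + (1/(λ+μ))(1 + μ/(λ+k)) − (λ+k+μ)/(λk + kμ + λμ) is strictly less than Δ_WOP = 1/λ + 1/k + 2/μ + 1/(λ+k) − (λ+k+μ)/(λk + kμ + λμ). -/
theorem avg_aoi_preemption_lt_no_preemption
    (lam k mu : ℝ) (hlam : 0 < lam) (hk : 0 < k) (hmu : 0 < mu) :
    1/lam + 1/k + 1/mu + (1/(lam+mu)) * (1 + mu/(lam+k))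
      - (lam+k+mu)/(lam*k + k*mu + lam*mu)
    < 1/lam + 1/k + 2/mu + 1/(lam+k)
      - (lam+k+mu)/(lam*k + k*mu + lam*mu) := by
  have h1 : 0 < lam + mu := by linarith
  have h2 : 0 < lam + k := by linarith
  have key : (1/(lam+mu)) * (1 + mu/(lam+k)) < 1/mu + 1/(lam+k) := by
    rw [div_add_div _ _ (ne_of_gt hmu) (ne_of_gt h2),
      show (1:ℝ)+mu/(lam+k) = (lam+k+mu)/(lam+k) by field_simp,
      one_div, inv_mul_eq_div, div_div, div_lt_div_iff₀ (by positivity) (by positivity)]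
    nlinarith [mul_pos hlam hmu, mul_pos (mul_pos hlam hmu) h2, mul_pos hmu hmu,
      mul_pos (mul_pos hmu hmu) h2]
  have h3 : (2:ℝ)/mu = 1/mu + 1/mu := by ring
  linarith
end

section
/- For all positive reals λ, k, μ, the average peak AoI with preemption Δp_WP = 1/λ + 1/k + 1/μ + (1/(λ+μ))(1 + μ/(λ+k)) is strictly less than the average peak AoI without preemption Δp_WOP = 1/λ + 1/k + 2/μ + 1/(λ+k). -/
theorem avg_peak_aoi_preemption_lt_no_preemption
    (lam k mu : ℝ) (hlam : 0 < lam) (hk : 0 < k) (hmu : 0 < mu) :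
    1/lam + 1/k + 1/mu + (1/(lam+mu)) * (1 + mu/(lam+k))
    < 1/lam + 1/k + 2/mu + 1/(lam+k) := by
  have h1 : (1:ℝ)/(lam+mu) < 1/mu := by
    apply one_div_lt_one_div_of_lt hmu; linarith
  have hlk : (0:ℝ) < lam + k := by linarith
  have h3 : (1/(lam+mu)) * (mu/(lam+k)) < 1/(lam+k) := by
    rw [show (1/(lam+mu))*(mu/(lam+k)) = mu/((lam+mu)*(lam+k)) by field_simp,
      div_lt_div_iff₀ (by positivity) hlk]
    nlinarith
  have he : (1/(lam+mu)) * (1 + mu/(lam+k)) = 1/(lam+mu) + (1/(lam+mu)) * (mu/(lam+k)) := by ring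
  have h2 : (2:ℝ)/mu = 1/mu + 1/mu := by ring
  rw [he, h2]
  linarith
end

section
/- For fixed λ > 0 and μ > 0, the function k ↦ 1/λ + 1/k + 2/μ + 1/(λ+k) − (λ+k+μ)/(λk + kμ + λμ) is strictly decreasing on (0,∞); specifically its derivative equals −1/(λ+k)² − λμ(k² + 2kμ + 2λk + λμ)/(k²(λk + kμ + λμ)²), which is negative for all k > 0. -/
lemma aoi_deriv (lam mu : ℝ) (hlam : 0 < lam) (hmu : 0 < mu)
    (k : ℝ) (hk : 0 < k) :
    HasDerivAt
      (fun k : ℝ => 1/lam + 1/k + 2/mu + 1/(lam+k)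
        - (lam+k+mu)/(lam*k + k*mu + lam*mu))
      (-(1/(lam+k)^2)
        - lam*mu*(k^2 + 2*k*mu + 2*lam*k + lam*mu)
          / (k^2 * (lam*k + k*mu + lam*mu)^2)) k := by
  have hk0 : k ≠ 0 := ne_of_gt hk
  have hlk : lam + k ≠ 0 := by positivity
  have hD : lam*k + k*mu + lam*mu ≠ 0 := by positivity
  have h1 : HasDerivAt (fun k : ℝ => 1/k) (-(1/k^2)) k := by
    simpa using (hasDerivAt_inv hk0)
  have h2 : HasDerivAt (fun k : ℝ => 1/(lam+k)) (-(1/(lam+k)^2)) k := by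
    have := ((hasDerivAt_inv hlk).comp k ((hasDerivAt_const k lam).add (hasDerivAt_id k)))
    simpa [one_div, Function.comp_def] using this
  have hN : HasDerivAt (fun k : ℝ => lam+k+mu) 1 k := by
    simpa [Pi.add_def] using ((hasDerivAt_const k lam).add (hasDerivAt_id k)).add (hasDerivAt_const k mu)
  have hDd : HasDerivAt (fun k : ℝ => lam*k + k*mu + lam*mu) (lam + mu) k := by
    have := (((hasDerivAt_id k).const_mul lam).add ((hasDerivAt_id k).mul_const mu)).add
      (hasDerivAt_const k (lam*mu))
    simpa [Pi.add_def] using this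
  have h3 : HasDerivAt (fun k : ℝ => (lam+k+mu)/(lam*k + k*mu + lam*mu))
      ((1 * (lam*k + k*mu + lam*mu) - (lam+k+mu) * (lam+mu)) / (lam*k + k*mu + lam*mu)^2) k :=
    hN.div hDd hD
  have h := ((((hasDerivAt_const k (1/lam)).add h1).add (hasDerivAt_const k (2/mu))).add
      h2).sub h3
  convert h using 1
  · rfl
  · rfl
  · ext x; simp
  field_simp
  ring

theorem avg_aoi_wop_strict_anti
    (lam mu : ℝ) (hlam : 0 < lam) (hmu : 0 < mu) :
    StrictAntiOn
      (fun k : ℝ => 1/lam + 1/k + 2/mu + 1/(lam+k)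
        - (lam+k+mu)/(lam*k + k*mu + lam*mu)) (Set.Ioi 0)
    ∧ ∀ k : ℝ, 0 < k →
      HasDerivAt
        (fun k : ℝ => 1/lam + 1/k + 2/mu + 1/(lam+k)
          - (lam+k+mu)/(lam*k + k*mu + lam*mu))
        (-(1/(lam+k)^2)
          - lam*mu*(k^2 + 2*k*mu + 2*lam*k + lam*mu)
            / (k^2 * (lam*k + k*mu + lam*mu)^2)) k
      ∧ (-(1/(lam+k)^2)
          - lam*mu*(k^2 + 2*k*mu + 2*lam*k + lam*mu)
            / (k^2 * (lam*k + k*mu + lam*mu)^2)) < 0 := by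
  have hneg : ∀ k : ℝ, 0 < k →
      (-(1/(lam+k)^2)
        - lam*mu*(k^2 + 2*k*mu + 2*lam*k + lam*mu)
          / (k^2 * (lam*k + k*mu + lam*mu)^2)) < 0 := by
    intro k hk
    have h1 : 0 < 1/(lam+k)^2 := by positivity
    have h2 : 0 ≤ lam*mu*(k^2 + 2*k*mu + 2*lam*k + lam*mu)
        / (k^2 * (lam*k + k*mu + lam*mu)^2) := by positivity
    linarith
  refine ⟨?_, fun k hk => ⟨aoi_deriv lam mu hlam hmu k hk, hneg k hk⟩⟩
  apply StrictAntiOn.mono (s := Set.Ioi (0:ℝ))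
    (strictAntiOn_of_hasDerivWithinAt_neg (f := fun k : ℝ => 1/lam + 1/k + 2/mu + 1/(lam+k)
        - (lam+k+mu)/(lam*k + k*mu + lam*mu))
      (f' := fun k => -(1/(lam+k)^2)
        - lam*mu*(k^2 + 2*k*mu + 2*lam*k + lam*mu)
          / (k^2 * (lam*k + k*mu + lam*mu)^2))
      (convex_Ioi 0) ?_ ?_ ?_) le_rfl
  · intro k hk
    exact ((aoi_deriv lam mu hlam hmu k hk).continuousAt).continuousWithinAt
  · intro k hk
    rw [interior_Ioi] at hk
    exact ((aoi_deriv lam mu hlam hmu k hk).hasDerivWithinAt)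
  · intro k hk
    rw [interior_Ioi] at hk
    exact hneg k hk
end

section
/- For fixed λ > 0 and μ > 0, the function k ↦ 1/λ + 1/k + 1/μ + (1/(λ+μ))(1 + μ/(λ+k)) − (λ+k+μ)/(λk + kμ + λμ) is strictly decreasing on (0,∞); its derivative equals −μ/((λ+μ)(λ+k)²) − λμ(k² + 2kμ + 2λk + λμ)/(k²(λk + kμ + λμ)²). -/
theorem avg_aoi_wp_strict_anti
    (lam mu : ℝ) (hlam : 0 < lam) (hmu : 0 < mu) :
    StrictAntiOn
      (fun k : ℝ => 1/lam + 1/k + 1/mu + (1/(lam+mu)) * (1 + mu/(lam+k))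
        - (lam+k+mu)/(lam*k + k*mu + lam*mu)) (Set.Ioi 0)
    ∧ ∀ k : ℝ, 0 < k →
      HasDerivAt
        (fun k : ℝ => 1/lam + 1/k + 1/mu + (1/(lam+mu)) * (1 + mu/(lam+k))
          - (lam+k+mu)/(lam*k + k*mu + lam*mu))
        (-(mu/((lam+mu)*(lam+k)^2))
          - lam*mu*(k^2 + 2*k*mu + 2*lam*k + lam*mu)
            / (k^2 * (lam*k + k*mu + lam*mu)^2)) k := by
  have hlm : 0 < lam + mu := by linarith
  have hderiv : ∀ k : ℝ, 0 < k →
      HasDerivAt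
        (fun k : ℝ => 1/lam + 1/k + 1/mu + (1/(lam+mu)) * (1 + mu/(lam+k))
          - (lam+k+mu)/(lam*k + k*mu + lam*mu))
        (-(mu/((lam+mu)*(lam+k)^2))
          - lam*mu*(k^2 + 2*k*mu + 2*lam*k + lam*mu)
            / (k^2 * (lam*k + k*mu + lam*mu)^2)) k := by
    intro k hk
    have hk0 : k ≠ 0 := ne_of_gt hk
    have hlk : 0 < lam + k := by linarith
    have hlk0 : lam + k ≠ 0 := ne_of_gt hlk
    have hD : 0 < lam*k + k*mu + lam*mu := by positivity
    have hD0 : lam*k + k*mu + lam*mu ≠ 0 := ne_of_gt hD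
    have h1 : HasDerivAt (fun k : ℝ => 1/k) (-(k^2)⁻¹) k := by
      simpa [one_div] using hasDerivAt_inv hk0
    have h2 := (((hasDerivAt_const k (1:ℝ)).add
        (((hasDerivAt_const k mu).div ((hasDerivAt_const k lam).add (hasDerivAt_id k))
          hlk0))).const_mul (1/(lam+mu)))
    have h3 := (((hasDerivAt_const k lam).add (hasDerivAt_id k)).add
        (hasDerivAt_const k mu)).div
        ((((hasDerivAt_const k lam).mul (hasDerivAt_id k)).add
          ((hasDerivAt_id k).mul (hasDerivAt_const k mu))).add (hasDerivAt_const k (lam*mu)))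
        hD0
    have h := ((((hasDerivAt_const k (1/lam)).add h1).add (hasDerivAt_const k (1/mu))).add
      h2).sub h3
    refine h.congr_deriv ?_
    simp only [Pi.add_apply, Pi.mul_apply, id]
    field_simp
    ring
  refine ⟨?_, hderiv⟩
  apply StrictAntiOn.mono (s := Set.Ioi 0) ?_ le_rfl
  apply strictAntiOn_of_deriv_neg (convex_Ioi 0)
  · intro k hk
    exact ((hderiv k hk).differentiableAt).continuousAt.continuousWithinAt
  · intro k hk
    rw [interior_Ioi] at hk
    have hk' : (0:ℝ) < k := hk
    rw [(hderiv k hk).deriv]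
    have hlk : 0 < lam + k := by linarith [hk']
    have hD : 0 < lam*k + k*mu + lam*mu := by
      nlinarith [mul_pos hlam hk', mul_pos hk' hmu, mul_pos hlam hmu]
    have ha : 0 < mu/((lam+mu)*(lam+k)^2) := div_pos hmu (mul_pos hlm (pow_pos hlk 2))
    have hb : 0 < lam*mu*(k^2 + 2*k*mu + 2*lam*k + lam*mu)
        / (k^2 * (lam*k + k*mu + lam*mu)^2) := by
      refine div_pos (mul_pos (mul_pos hlam hmu) ?_) (mul_pos (pow_pos hk' 2) (pow_pos hD 2))
      nlinarith [sq_nonneg k, mul_pos hk' hmu, mul_pos hlam hk', mul_pos hlam hmu]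
    linarith
end

section
/- Let λ, μ, γ, w > 0 and set A = w(λ+μ+λγ)+λμ and D = A² − 4λ(λ+μ)γw². Then both roots of w(λ+μ)γx² − Ax + λw = 0 are real, the smaller root x₁ = (A − √D)/(2wγ(λ+μ)) satisfies 0 < x₁ < 1/γ, and the larger root x₂ = (A + √D)/(2wγ(λ+μ)) satisfies x₂ > 1/γ. Consequently the fixed-point equation x = λw(1−γx)/((λ+μ)w(1−γx)+λμ) has a unique solution in (0, 1/γ). -/
set_option maxHeartbeats 800000


theorem quadratic_roots_and_unique_fixed_point
    (lam mu gam w : ℝ) (hlam : 0 < lam) (hmu : 0 < mu) (hgam : 0 < gam) (hw : 0 < w) :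
    let A := w*(lam+mu+lam*gam) + lam*mu
    let D := A^2 - 4*lam*(lam+mu)*gam*w^2
    let x1 := (A - Real.sqrt D) / (2*w*gam*(lam+mu))
    let x2 := (A + Real.sqrt D) / (2*w*gam*(lam+mu))
    0 ≤ D
    ∧ w*(lam+mu)*gam*x1^2 - A*x1 + lam*w = 0
    ∧ w*(lam+mu)*gam*x2^2 - A*x2 + lam*w = 0
    ∧ 0 < x1 ∧ x1 < 1/gam ∧ x2 > 1/gam
    ∧ ∃! x : ℝ, x ∈ Set.Ioo 0 (1/gam)
        ∧ x = lam*w*(1-gam*x) / ((lam+mu)*w*(1-gam*x) + lam*mu) := by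
  intro A D x1 x2
  have hA : A = w*(lam+mu+lam*gam) + lam*mu := rfl
  have hD : D = A^2 - 4*lam*(lam+mu)*gam*w^2 := rfl
  have hx1 : x1 = (A - Real.sqrt D) / (2*w*gam*(lam+mu)) := rfl
  have hx2 : x2 = (A + Real.sqrt D) / (2*w*gam*(lam+mu)) := rfl
  clear_value A D x1 x2
  have hlm : 0 < lam + mu := by linarith
  have ha : (0:ℝ) < 2*w*gam*(lam+mu) := by positivity
  have hApos : 0 < A := by rw [hA]; positivity
  have hDpos : 0 < D := by
    rw [hD, hA]
    nlinarith [sq_nonneg (w*(lam+mu) - lam*gam*w), mul_pos hlam hmu,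
      mul_pos hw hlm, mul_pos (mul_pos hlam hgam) hw, sq_nonneg (lam*mu)]
  set s := Real.sqrt D with hs
  have hsnn : 0 ≤ s := Real.sqrt_nonneg _
  have hssq : s^2 = D := Real.sq_sqrt hDpos.le
  have hssq' : s^2 = A^2 - 4*lam*(lam+mu)*gam*w^2 := by rw [hssq, hD]
  have hsltA : s < A := by nlinarith [mul_pos (mul_pos (mul_pos hlam hlm) hgam) (mul_pos hw hw)]
  -- key inequality: (A - 2w(λ+μ))² < D
  have hkey : (A - 2*w*(lam+mu))^2 < D := by
    rw [hD, hA]; nlinarith [mul_pos (mul_pos (mul_pos hw hlm) hlam) hmu]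
  have habs : |A - 2*w*(lam+mu)| < s := by
    apply abs_lt_of_sq_lt_sq _ hsnn
    rw [hssq]; exact hkey
  obtain ⟨h2l, h2r⟩ := abs_lt.mp habs
  have hx1pos : 0 < x1 := by
    rw [hx1]; exact div_pos (by linarith) ha
  have hx1lt : x1 < 1/gam := by
    rw [hx1, div_lt_div_iff₀ ha hgam]
    have : A - s < 2*w*(lam+mu) := by linarith
    nlinarith [this, hgam]
  have hx2gt : x2 > 1/gam := by
    rw [hx2, gt_iff_lt, div_lt_div_iff₀ hgam ha]
    have : 2*w*(lam+mu) < A + s := by linarith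
    nlinarith [this, hgam]
  have hq1 : w*(lam+mu)*gam*x1^2 - A*x1 + lam*w = 0 := by
    rw [hx1]; field_simp; linear_combination hssq'
  have hq2 : w*(lam+mu)*gam*x2^2 - A*x2 + lam*w = 0 := by
    rw [hx2]; field_simp; linear_combination hssq'
  refine ⟨hDpos.le, hq1, hq2, hx1pos, hx1lt, hx2gt, x1, ⟨⟨hx1pos, hx1lt⟩, ?_⟩, ?_⟩
  · have h1 : 0 < 1 - gam*x1 := by
      have := (lt_div_iff₀ hgam).mp hx1lt
      linarith [this]
    have hden : 0 < (lam+mu)*w*(1-gam*x1) + lam*mu := by positivity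
    rw [eq_div_iff hden.ne']
    linear_combination -hq1 - x1*hA
  · rintro y ⟨⟨hy0, hy1⟩, hyeq⟩
    have h1y : 0 < 1 - gam*y := by
      have := (lt_div_iff₀ hgam).mp hy1
      linarith [this]
    have hdeny : 0 < (lam+mu)*w*(1-gam*y) + lam*mu := by positivity
    rw [eq_div_iff hdeny.ne'] at hyeq
    have hqy : w*(lam+mu)*gam*y^2 - A*y + lam*w = 0 := by
      rw [hA]; linear_combination -hyeq
    have hfac : w*(lam+mu)*gam*((y-x1)*(y-x2)) = 0 := by
      rw [hx1, hx2]; field_simp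
      linear_combination 4*w*(lam+mu)*gam * hqy - hssq'
    have := mul_eq_zero.mp hfac
    rcases this with h | h
    · exfalso; nlinarith [mul_pos (mul_pos hw hlm) hgam]
    · rcases mul_eq_zero.mp h with h' | h'
      · linarith [sub_eq_zero.mp h']
      · exfalso
        have : y = x2 := by linarith [sub_eq_zero.mp h']
        rw [this] at hy1; linarith [hx2gt]
end

section
/- Let λ, k, μ > 0. If E[Y] = 1/λ + 1/k + 1/μ, E[Y²] = 2/λ² + 2/k² + 2/μ² + 2/(λμ) + 2/(λk) + 2/(kμ), and E[T] = 1/(λ+k) + 1/μ, then E[T] + E[Y²]/(2E[Y]) = 1/λ + 1/k + 2/μ + 1/(λ+k) − (λ+k+μ)/(λk + kμ + λμ). -/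
theorem avg_aoi_wop_formula
    (lam k mu EY EY2 ET : ℝ) (hlam : 0 < lam) (hk : 0 < k) (hmu : 0 < mu)
    (hEY : EY = 1/lam + 1/k + 1/mu)
    (hEY2 : EY2 = 2/lam^2 + 2/k^2 + 2/mu^2 + 2/(lam*mu) + 2/(lam*k) + 2/(k*mu))
    (hET : ET = 1/(lam+k) + 1/mu) :
    ET + EY2/(2*EY)
      = 1/lam + 1/k + 2/mu + 1/(lam+k) - (lam+k+mu)/(lam*k + k*mu + lam*mu) := by
  have h1 : lam ≠ 0 := hlam.ne'
  have h2 : k ≠ 0 := hk.ne'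
  have h3 : mu ≠ 0 := hmu.ne'
  have h4 : lam + k ≠ 0 := by positivity
  have h5 : lam*k + k*mu + lam*mu ≠ 0 := by positivity
  have h6 : EY ≠ 0 := by rw [hEY]; positivity
  subst hEY2 hET
  rw [hEY] at h6 ⊢
  field_simp
  ring
end

section
/- Let λ, k, μ > 0. If E[Y] = 1/λ + 1/k + 1/μ, E[Y²] = 2/λ² + 2/k² + 2/μ² + 2/(λμ) + 2/(λk) + 2/(kμ), and E[T] = (1/(λ+μ))(1 + μ/(λ+k)), then E[T] + E[Y²]/(2E[Y]) = 1/λ + 1/k + 1/μ + (1/(λ+μ))(1 + μ/(λ+k)) − (λ+k+μ)/(λk + kμ + λμ). -/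
theorem avg_aoi_wp_formula
    (lam k mu EY EY2 ET : ℝ) (hlam : 0 < lam) (hk : 0 < k) (hmu : 0 < mu)
    (hEY : EY = 1/lam + 1/k + 1/mu)
    (hEY2 : EY2 = 2/lam^2 + 2/k^2 + 2/mu^2 + 2/(lam*mu) + 2/(lam*k) + 2/(k*mu))
    (hET : ET = (1/(lam+mu)) * (1 + mu/(lam+k))) :
    ET + EY2/(2*EY)
      = 1/lam + 1/k + 1/mu + (1/(lam+mu)) * (1 + mu/(lam+k))
        - (lam+k+mu)/(lam*k + k*mu + lam*mu) := by
  have hlam' := hlam.ne'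
  have hk' := hk.ne'
  have hmu' := hmu.ne'
  have hs : lam*k + k*mu + lam*mu ≠ 0 := by positivity
  have hEYpos : 0 < EY := by rw [hEY]; positivity
  have hlm : lam + mu ≠ 0 := by positivity
  have hlk : lam + k ≠ 0 := by positivity
  subst hEY hEY2 hET
  field_simp
  ring
end

section
/- Let λ, μ, γ, w > 0 and let θ(w) = γ x_S(w) where x_S(w) ∈ (0, 1/γ) solves x = λw(1−γx)/((λ+μ)w(1−γx)+λμ). Then θ is differentiable in w with dθ/dw = γλ²μ(1−θ)/(((λ+μ)w(1−θ) + λμ)² + γλ²μ w), which is strictly positive and bounded above by γ/μ. -/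
theorem busy_fraction_derivative
    (lam mu gam : ℝ) (hlam : 0 < lam) (hmu : 0 < mu) (hgam : 0 < gam)
    (xS : ℝ → ℝ)
    (hxS : ∀ w : ℝ, 0 < w → xS w ∈ Set.Ioo 0 (1/gam)
      ∧ xS w = lam*w*(1-gam*(xS w)) / ((lam+mu)*w*(1-gam*(xS w)) + lam*mu)) :
    ∀ w : ℝ, 0 < w →
      HasDerivAt (fun v => gam * xS v)
        (gam*lam^2*mu*(1 - gam*(xS w))
          / (((lam+mu)*w*(1 - gam*(xS w)) + lam*mu)^2 + gam*lam^2*mu*w)) w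
      ∧ 0 < gam*lam^2*mu*(1 - gam*(xS w))
          / (((lam+mu)*w*(1 - gam*(xS w)) + lam*mu)^2 + gam*lam^2*mu*w)
      ∧ gam*lam^2*mu*(1 - gam*(xS w))
          / (((lam+mu)*w*(1 - gam*(xS w)) + lam*mu)^2 + gam*lam^2*mu*w) ≤ gam/mu := by
  have hlmmu : 0 < lam*mu := mul_pos hlam hmu
  -- basic facts at any point v > 0
  have hbase : ∀ v : ℝ, 0 < v →
      0 < 1 - gam*(xS v) ∧
      ((lam+mu)*gam)*v*(xS v)^2 - (((lam+mu)+lam*gam)*v + lam*mu)*(xS v) + lam*v = 0 ∧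
      lam*mu ≤ (((lam+mu)+lam*gam)*v + lam*mu) - 2*(((lam+mu)*gam)*v)*(xS v) := by
    intro v hv
    obtain ⟨⟨h0, h1⟩, hfx⟩ := hxS v hv
    have hgx : gam * xS v < 1 := by
      rw [mul_comm]; exact (lt_div_iff₀ hgam).mp h1
    have h1x : 0 < 1 - gam*(xS v) := by linarith
    have hD : 0 < (lam+mu)*v*(1-gam*(xS v)) + lam*mu := by
      have := mul_nonneg (mul_nonneg (add_pos hlam hmu).le hv.le) h1x.le
      linarith
    have hfe : lam*v*(1-gam*(xS v)) = xS v * ((lam+mu)*v*(1-gam*(xS v)) + lam*mu) :=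
      (div_eq_iff hD.ne').mp hfx.symm
    have hq : ((lam+mu)*gam)*v*(xS v)^2 - (((lam+mu)+lam*gam)*v + lam*mu)*(xS v) + lam*v = 0 := by
      linear_combination hfe
    refine ⟨h1x, hq, ?_⟩
    have h3 : (lam - (lam+mu)*(xS v)) * ((lam+mu)*v*(1-gam*(xS v)) + lam*mu) = lam^2*mu := by
      linear_combination (lam+mu)*hfe
    have h4 : 0 < lam - (lam+mu)*(xS v) := by
      nlinarith [h3, hD, mul_pos (mul_pos hlam hlam) hmu]
    nlinarith [mul_nonneg (mul_nonneg (add_pos hlam hmu).le hv.le) h1x.le,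
      mul_pos (mul_pos hgam hv) h4]
  intro w hw
  obtain ⟨⟨hx0, hx1⟩, hfixw⟩ := hxS w hw
  obtain ⟨h1x, hqw, hmw⟩ := hbase w hw
  have hEw : 0 < (((lam+mu)+lam*gam)*w + lam*mu) - 2*(((lam+mu)*gam)*w)*(xS w) :=
    lt_of_lt_of_le hlmmu hmw
  -- the explicit formula
  set φ : ℝ → ℝ := fun v =>
    ((((lam+mu)+lam*gam)*v + lam*mu)
      - Real.sqrt (((((lam+mu)+lam*gam)*v + lam*mu))^2 - 4*(((lam+mu)*gam)*v)*(lam*v)))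
    / (2 * (((lam+mu)*gam)*v)) with hφdef
  have hphi : ∀ v : ℝ, 0 < v → φ v = xS v := by
    intro v hv
    obtain ⟨h1xv, hq, hm⟩ := hbase v hv
    have hEv : 0 < (((lam+mu)+lam*gam)*v + lam*mu) - 2*(((lam+mu)*gam)*v)*(xS v) :=
      lt_of_lt_of_le hlmmu hm
    have hdisc : ((((lam+mu)+lam*gam)*v + lam*mu))^2 - 4*(((lam+mu)*gam)*v)*(lam*v)
        = ((((lam+mu)+lam*gam)*v + lam*mu) - 2*(((lam+mu)*gam)*v)*(xS v))^2 := by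
      linear_combination (-(4*((lam+mu)*gam*v)))*hq
    have hAv : (0:ℝ) < ((lam+mu)*gam)*v := by positivity
    rw [hφdef]
    simp only
    rw [hdisc, Real.sqrt_sq hEv.le]
    field_simp
    ring
  -- differentiability of φ at w
  have hA : HasDerivAt (fun v : ℝ => ((lam+mu)*gam)*v) ((lam+mu)*gam) w := by
    simpa using (hasDerivAt_id w).const_mul ((lam+mu)*gam)
  have hB : HasDerivAt (fun v : ℝ => ((lam+mu)+lam*gam)*v + lam*mu) ((lam+mu)+lam*gam) w := by
    simpa using ((hasDerivAt_id w).const_mul ((lam+mu)+lam*gam)).add_const (lam*mu)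
  have hC : HasDerivAt (fun v : ℝ => lam*v) lam w := by
    simpa using (hasDerivAt_id w).const_mul lam
  have hdiscw : ((((lam+mu)+lam*gam)*w + lam*mu))^2 - 4*(((lam+mu)*gam)*w)*(lam*w)
      = ((((lam+mu)+lam*gam)*w + lam*mu) - 2*(((lam+mu)*gam)*w)*(xS w))^2 := by
    linear_combination (-(4*((lam+mu)*gam*w)))*hqw
  have hdiscdiff : DifferentiableAt ℝ
      (fun v : ℝ => ((((lam+mu)+lam*gam)*v + lam*mu))^2 - 4*(((lam+mu)*gam)*v)*(lam*v)) w :=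
    (hB.differentiableAt.pow 2).sub
      ((hA.differentiableAt.const_mul 4).mul hC.differentiableAt)
  have hsq : DifferentiableAt ℝ
      (fun v : ℝ => Real.sqrt (((((lam+mu)+lam*gam)*v + lam*mu))^2 - 4*(((lam+mu)*gam)*v)*(lam*v))) w :=
    hdiscdiff.sqrt (by rw [hdiscw]; exact (pow_pos hEw 2).ne')
  have hφdiff : DifferentiableAt ℝ φ w := by
    apply DifferentiableAt.div (hB.differentiableAt.sub hsq)
      (hA.differentiableAt.const_mul 2)
    have : (0:ℝ) < 2 * (((lam+mu)*gam)*w) := by positivity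
    exact this.ne'
  set d := deriv φ w with hdd
  have hd : HasDerivAt φ d w := hφdiff.hasDerivAt
  have hmem : Set.Ioi (0:ℝ) ∈ nhds w := Ioi_mem_nhds hw
  have heq : φ =ᶠ[nhds w] xS :=
    Filter.eventuallyEq_of_mem hmem (fun v hv => hphi v hv)
  have hdx : HasDerivAt xS d w := hd.congr_of_eventuallyEq heq.symm
  -- differentiate the quadratic identity
  have hzero : (fun v : ℝ => ((lam+mu)*gam)*v*(xS v)^2 - (((lam+mu)+lam*gam)*v + lam*mu)*(xS v) + lam*v)
      =ᶠ[nhds w] (fun _ => (0:ℝ)) :=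
    Filter.eventuallyEq_of_mem hmem (fun v hv => (hbase v hv).2.1)
  have hG0 : HasDerivAt (fun v : ℝ => ((lam+mu)*gam)*v*(xS v)^2 - (((lam+mu)+lam*gam)*v + lam*mu)*(xS v) + lam*v)
      0 w := (hasDerivAt_const w (0:ℝ)).congr_of_eventuallyEq hzero
  have he := (((hA.mul (hdx.pow 2)).sub (hB.mul hdx)).add hC).unique hG0
  have hde : d * ((((lam+mu)+lam*gam)*w + lam*mu) - 2*(((lam+mu)*gam)*w)*(xS w))
      = (lam+mu)*gam*(xS w)^2 - ((lam+mu)+lam*gam)*(xS w) + lam := by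
    simp only [Pi.pow_apply] at he
    linear_combination -he
  have hd2 : d * (((((lam+mu)+lam*gam)*w + lam*mu) - 2*(((lam+mu)*gam)*w)*(xS w)) * w)
      = lam*mu*(xS w) := by
    linear_combination w*hde + hqw
  -- abbreviations for the target
  have hQ : (0:ℝ) < ((lam+mu)*w*(1 - gam*(xS w)) + lam*mu)^2 + gam*lam^2*mu*w := by
    have := sq_nonneg ((lam+mu)*w*(1 - gam*(xS w)) + lam*mu)
    have h2 : (0:ℝ) < gam*lam^2*mu*w := by positivity
    linarith
  have hEwne : ((((lam+mu)+lam*gam)*w + lam*mu) - 2*(((lam+mu)*gam)*w)*(xS w)) * w ≠ 0 :=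
    (mul_pos hEw hw).ne'
  have key : (gam * d * (((lam+mu)*w*(1 - gam*(xS w)) + lam*mu)^2 + gam*lam^2*mu*w))
        * (((((lam+mu)+lam*gam)*w + lam*mu) - 2*(((lam+mu)*gam)*w)*(xS w)) * w)
      = (gam*lam^2*mu*(1 - gam*(xS w)))
        * (((((lam+mu)+lam*gam)*w + lam*mu) - 2*(((lam+mu)*gam)*w)*(xS w)) * w) := by
    linear_combination (gam * (((lam+mu)*w*(1 - gam*(xS w)) + lam*mu)^2 + gam*lam^2*mu*w)) * hd2
      - gam*lam*mu*(((lam+mu)*w*(1 - gam*(xS w)) + lam*mu) + gam*lam*w) * hqw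
  have hcan := mul_right_cancel₀ hEwne key
  have hfinal : gam * d = gam*lam^2*mu*(1 - gam*(xS w))
      / (((lam+mu)*w*(1 - gam*(xS w)) + lam*mu)^2 + gam*lam^2*mu*w) := by
    rw [eq_div_iff hQ.ne']
    exact hcan
  refine ⟨?_, ?_, ?_⟩
  · rw [← hfinal]
    exact hdx.const_mul gam
  · apply div_pos _ hQ
    positivity
  · have hDge : lam*mu ≤ (lam+mu)*w*(1 - gam*(xS w)) + lam*mu := by
      have := mul_nonneg (mul_nonneg (add_pos hlam hmu).le hw.le) h1x.le
      linarith
    have hQge : lam^2*mu^2 ≤ ((lam+mu)*w*(1 - gam*(xS w)) + lam*mu)^2 + gam*lam^2*mu*w := by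
      have hsq : (lam*mu)^2 ≤ ((lam+mu)*w*(1 - gam*(xS w)) + lam*mu)^2 :=
        pow_le_pow_left₀ hlmmu.le hDge 2
      have h2 : (0:ℝ) < gam*lam^2*mu*w := by positivity
      have h3 : (lam*mu)^2 = lam^2*mu^2 := by ring
      linarith [hsq, h2, h3.ge, h3.le]
    have hnum : gam*lam^2*mu*(1 - gam*(xS w)) ≤ gam*lam^2*mu := by
      have h4 := mul_nonneg (by positivity : (0:ℝ) ≤ gam*lam^2*mu) (mul_nonneg hgam.le hx0.le)
      linarith [h4]
    calc gam*lam^2*mu*(1 - gam*(xS w))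
          / (((lam+mu)*w*(1 - gam*(xS w)) + lam*mu)^2 + gam*lam^2*mu*w)
        ≤ (gam*lam^2*mu) / (lam^2*mu^2) :=
          div_le_div₀ (by positivity) hnum (by positivity) hQge
      _ = gam/mu := by
          rw [div_eq_div_iff (by positivity) hmu.ne']
          ring
end

section
/- Let λ, μ, γ, w > 0 and let x* = (x_I*, x_W*, x_S*) be the equilibrium of the ODE system ẋ_I = −λx_I + μx_S, ẋ_W = λx_I − w(1−γx_S)x_W, ẋ_S = w(1−γx_S)x_W − μx_S with x_I + x_W + x_S = 1 and γx_S* < 1. Consider the linearized system q̇_I = −λq_I + μq_S, q̇_W = λq_I − w(1−γx_S*)q_W + wγx_W* q_S, q̇_S = w(1−γx_S*)q_W − (wγx_W* + μ)q_S restricted to the subspace q_I + q_W + q_S = 0. Then V(q) = |q_I| + |q_W| + |q_S| satisfies V̇ ≤ −δV along trajectories, where δ = min{λ, w(1−γx_S*), wγx_W*} > 0, and hence V(t) ≤ V(0)e^{−δt}. -/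
open Filter Set Topology

noncomputable def sgn' (v dv : ℝ) : ℝ :=
  if v = 0 then (if 0 ≤ dv then 1 else -1) else (if 0 ≤ v then 1 else -1)

lemma sgn'_pm (v dv : ℝ) : sgn' v dv = 1 ∨ sgn' v dv = -1 := by
  unfold sgn'; split_ifs <;> simp

lemma sgn'_mul_self (v dv : ℝ) : sgn' v dv * v = |v| := by
  unfold sgn'
  split_ifs with h1 h2 h3
  · simp [h1]
  · simp [h1]
  · rw [abs_of_nonneg h3, one_mul]
  · rw [abs_of_neg (lt_of_not_ge h3)]; ring

lemma sgn'_mul_deriv (v dv : ℝ) :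
    sgn' v dv * dv = if v = 0 then |dv| else if 0 ≤ v then dv else -dv := by
  unfold sgn'
  split_ifs with h1 h2 h3
  · rw [abs_of_nonneg h2, one_mul]
  · rw [abs_of_neg (lt_of_not_ge h2)]; ring
  · ring
  · ring

set_option maxHeartbeats 1600000 in
lemma key_ineq (lam mu beta g : ℝ) (hlam : 0 < lam) (hmu : 0 < mu)
    (hbeta : 0 < beta) (hg : 0 < g)
    (a b c sa sb sc : ℝ) (hsum : a + b + c = 0)
    (hsa : sa = 1 ∨ sa = -1) (hsb : sb = 1 ∨ sb = -1) (hsc : sc = 1 ∨ sc = -1)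
    (ha : sa * a = |a|) (hb : sb * b = |b|) (hc : sc * c = |c|) :
    sa*(-lam*a + mu*c) + sb*(lam*a - beta*b + g*c) + sc*(beta*b - (g+mu)*c)
      ≤ -(min lam (min beta g)) * (|a| + |b| + |c|) := by
  have hd1 : min lam (min beta g) ≤ lam := min_le_left _ _
  have hd2 : min lam (min beta g) ≤ beta := (min_le_right _ _).trans (min_le_left _ _)
  have hd3 : min lam (min beta g) ≤ g := (min_le_right _ _).trans (min_le_right _ _)
  set d := min lam (min beta g) with hd
  have hd0 : 0 < d := lt_min hlam (lt_min hbeta hg)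
  rw [← ha, ← hb, ← hc]
  have ha0 : 0 ≤ sa * a := ha ▸ abs_nonneg a
  have hb0 : 0 ≤ sb * b := hb ▸ abs_nonneg b
  have hc0 : 0 ≤ sc * c := hc ▸ abs_nonneg c
  rcases hsa with rfl|rfl <;> rcases hsb with rfl|rfl <;> rcases hsc with rfl|rfl <;>
    nlinarith [mul_le_mul_of_nonneg_right hd1 ha0, mul_le_mul_of_nonneg_right hd2 hb0,
      mul_le_mul_of_nonneg_right hd3 hc0, mul_nonneg hmu.le ha0, mul_nonneg hmu.le hb0,
      mul_nonneg hmu.le hc0, mul_nonneg hg.le ha0, mul_nonneg hlam.le hc0,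
      mul_nonneg hbeta.le hb0, mul_nonneg hg.le hc0, mul_nonneg hlam.le ha0,
      mul_nonneg hbeta.le ha0, mul_nonneg hbeta.le hc0, mul_nonneg hlam.le hb0,
      mul_nonneg hg.le hb0]

lemma pm_mul_le_abs {s : ℝ} (hs : s = 1 ∨ s = -1) (y : ℝ) : s * y ≤ |y| := by
  rcases hs with rfl | rfl
  · simpa using le_abs_self y
  · simpa using neg_le_abs y

lemma tendsto_slope_abs {q : ℝ → ℝ} {d x : ℝ} (hq : HasDerivAt q d x) :
    Tendsto (fun z => (z - x)⁻¹ * (|q z| - |q x|)) (𝓝[>] x)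
      (𝓝 (sgn' (q x) d * d)) := by
  rw [sgn'_mul_deriv]
  have hslope : Tendsto (fun z => (z - x)⁻¹ * (q z - q x)) (𝓝[>] x) (𝓝 d) := by
    have h := (hasDerivAt_iff_tendsto_slope.1 hq).mono_left
      (nhdsWithin_mono x (fun z hz => ne_of_gt hz))
    refine h.congr' ?_
    filter_upwards [self_mem_nhdsWithin] with z hz
    rw [slope_def_field, div_eq_inv_mul]
  by_cases h0 : q x = 0
  · rw [if_pos h0]
    refine hslope.abs.congr' ?_
    filter_upwards [self_mem_nhdsWithin] with z hz
    have hz' : 0 < z - x := sub_pos.2 hz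
    rw [h0]
    simp [abs_mul, abs_of_pos (inv_pos.2 hz')]
  · rw [if_neg h0]
    by_cases hp : 0 ≤ q x
    · rw [if_pos hp]
      have hqx : 0 < q x := lt_of_le_of_ne hp (Ne.symm h0)
      have hev : ∀ᶠ z in 𝓝[>] x, 0 < q z :=
        ((hq.continuousAt.eventually (eventually_gt_nhds hqx))).filter_mono nhdsWithin_le_nhds
      refine hslope.congr' ?_
      filter_upwards [hev] with z hz
      rw [abs_of_pos hz, abs_of_pos hqx]
    · rw [if_neg hp]
      have hqx : q x < 0 := lt_of_not_ge hp
      have hev : ∀ᶠ z in 𝓝[>] x, q z < 0 :=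
        ((hq.continuousAt.eventually (eventually_lt_nhds hqx))).filter_mono nhdsWithin_le_nhds
      refine hslope.neg.congr' ?_
      · filter_upwards [hev] with z hz
        rw [abs_of_neg hz, abs_of_neg hqx]; ring

theorem lyapunov_exponential_decay
    (lam mu gam w xI xW xS : ℝ)
    (hlam : 0 < lam) (hmu : 0 < mu) (hgam : 0 < gam) (hw : 0 < w)
    (hsum : xI + xW + xS = 1) (hbusy : gam * xS < 1)
    (heqI : -lam*xI + mu*xS = 0)
    (heqW : lam*xI - w*(1-gam*xS)*xW = 0)
    (heqS : w*(1-gam*xS)*xW - mu*xS = 0)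
    (hxW : 0 < xW)
    (qI qW qS : ℝ → ℝ)
    (hdI : ∀ t : ℝ, HasDerivAt qI (-lam*(qI t) + mu*(qS t)) t)
    (hdW : ∀ t : ℝ, HasDerivAt qW
      (lam*(qI t) - w*(1-gam*xS)*(qW t) + w*gam*xW*(qS t)) t)
    (hdS : ∀ t : ℝ, HasDerivAt qS
      (w*(1-gam*xS)*(qW t) - (w*gam*xW + mu)*(qS t)) t)
    (hzero : ∀ t : ℝ, qI t + qW t + qS t = 0) :
    let V : ℝ → ℝ := fun t => |qI t| + |qW t| + |qS t|
    let delta : ℝ := min lam (min (w*(1-gam*xS)) (w*gam*xW))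
    0 < delta
    ∧ (∀ t : ℝ, ∀ d : ℝ, HasDerivAt V d t → d ≤ -delta * V t)
    ∧ (∀ t : ℝ, 0 ≤ t → V t ≤ V 0 * Real.exp (-delta * t)) := by
  intro V delta
  have hbeta : 0 < w*(1-gam*xS) := mul_pos hw (by linarith)
  have hg : 0 < w*gam*xW := mul_pos (mul_pos hw hgam) hxW
  have hdelta : 0 < delta := lt_min hlam (lt_min hbeta hg)
  -- derivative value functions
  set DI : ℝ → ℝ := fun s => -lam*(qI s) + mu*(qS s) with hDI
  set DW : ℝ → ℝ := fun s => lam*(qI s) - w*(1-gam*xS)*(qW s) + w*gam*xW*(qS s) with hDW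
  set DS : ℝ → ℝ := fun s => w*(1-gam*xS)*(qW s) - (w*gam*xW + mu)*(qS s) with hDS
  set F' : ℝ → ℝ := fun s =>
    sgn' (qI s) (DI s) * DI s + sgn' (qW s) (DW s) * DW s + sgn' (qS s) (DS s) * DS s with hF'
  have key : ∀ s : ℝ, F' s ≤ -delta * V s := by
    intro s
    have := key_ineq lam mu (w*(1-gam*xS)) (w*gam*xW) hlam hmu hbeta hg
      (qI s) (qW s) (qS s)
      (sgn' (qI s) (DI s)) (sgn' (qW s) (DW s)) (sgn' (qS s) (DS s))
      (hzero s) (sgn'_pm _ _) (sgn'_pm _ _) (sgn'_pm _ _)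
      (sgn'_mul_self _ _) (sgn'_mul_self _ _) (sgn'_mul_self _ _)
    simpa [hF', hDI, hDW, hDS, V, delta, neg_mul] using this
  refine ⟨hdelta, ?_, ?_⟩
  · -- differentiable points
    intro t d hdV
    set sI := sgn' (qI t) (DI t)
    set sW := sgn' (qW t) (DW t)
    set sS := sgn' (qS t) (DS t)
    have hWd : HasDerivAt (fun s => sI * qI s + sW * qW s + sS * qS s)
        (sI * DI t + sW * DW t + sS * DS t) t :=
      (((hdI t).const_mul sI).add ((hdW t).const_mul sW)).add ((hdS t).const_mul sS)
    have hle : ∀ s, sI * qI s + sW * qW s + sS * qS s ≤ V s := by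
      intro s
      have h1 : sI * qI s ≤ |qI s| := pm_mul_le_abs (sgn'_pm (qI t) (DI t)) (qI s)
      have h2 : sW * qW s ≤ |qW s| := pm_mul_le_abs (sgn'_pm (qW t) (DW t)) (qW s)
      have h3 : sS * qS s ≤ |qS s| := pm_mul_le_abs (sgn'_pm (qS t) (DS t)) (qS s)
      simp only [V]; linarith
    have heq : sI * qI t + sW * qW t + sS * qS t = V t := by
      simp only [V, sI, sW, sS, sgn'_mul_self]
    have hmin : IsLocalMin (fun s => V s - (sI * qI s + sW * qW s + sS * qS s)) t :=
      Filter.Eventually.of_forall (fun s => by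
        simp only [heq, sub_self]
        exact sub_nonneg.2 (hle s))
    have hzero' : d - (sI * DI t + sW * DW t + sS * DS t) = 0 :=
      hmin.hasDerivAt_eq_zero (hdV.sub hWd)
    have : d = F' t := by rw [hF']; dsimp only; linarith [hzero']
    rw [this]
    exact key t
  · -- exponential bound
    intro t ht
    have hcI : Continuous qI := continuous_iff_continuousAt.2 fun s => (hdI s).continuousAt
    have hcW : Continuous qW := continuous_iff_continuousAt.2 fun s => (hdW s).continuousAt
    have hcS : Continuous qS := continuous_iff_continuousAt.2 fun s => (hdS s).continuousAt
    have hcV : Continuous V := (hcI.abs.add hcW.abs).add hcS.abs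
    have main := le_gronwallBound_of_liminf_deriv_right_le
      (f := V) (f' := F') (δ := V 0) (K := -delta) (ε := 0) (a := 0) (b := t)
      (hcV.continuousOn)
      (fun x _ r hr => by
        have htend : Tendsto (fun z => (z - x)⁻¹ * (V z - V x)) (𝓝[>] x) (𝓝 (F' x)) := by
          have h1 := tendsto_slope_abs (hdI x)
          have h2 := tendsto_slope_abs (hdW x)
          have h3 := tendsto_slope_abs (hdS x)
          have := (h1.add h2).add h3
          exact this.congr fun z => by simp only [V]; ring
        exact ((htend.eventually (eventually_lt_nhds hr)).frequently))
      le_rfl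
      (fun x _ => by rw [add_zero]; exact key x)
    have := main t ⟨ht, le_rfl⟩
    rwa [sub_zero, gronwallBound_ε0] at this
end
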